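/- Let 0 < s < 1, let α > 4, define η(x) = (1+‖x‖²)^{-α/2} for x ∈ ℝ² and η_R(x) = η(x/R) for R ≥ 1. For each R ≥ 1 and x ∈ ℝ² the integral F_R(x) = ∫_{ℝ²} (η_R(x+y) + η_R(x-y) - 2·η_R(x)) / ‖y‖^{2+2s} dy converges absolutely, and the supremum over x ∈ ℝ² of |F_R(x)| tends to 0 as R → ∞. -/

import Mathlib

open MeasureTheory Filter Real

set_option synthInstance.maxHeartbeats 1000000
set_option maxHeartbeats 2000000

noncomputable def eta (α : ℝ) (x : EuclideanSpace ℝ (Fin 2)) : ℝ :=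
  (1 + ‖x‖ ^ 2) ^ (-(α / 2))

noncomputable def etaR (α R : ℝ) (x : EuclideanSpace ℝ (Fin 2)) : ℝ :=
  eta α (R⁻¹ • x)

noncomputable def FR (s α R : ℝ) (x : EuclideanSpace ℝ (Fin 2)) : ℝ :=
  ∫ y : EuclideanSpace ℝ (Fin 2),
    (etaR α R (x + y) + etaR α R (x - y) - 2 * etaR α R x) / ‖y‖ ^ (2 + 2 * s)

abbrev E2 := EuclideanSpace ℝ (Fin 2)

lemma hasDerivAt_one_add_rpow (p t : ℝ) (ht : 0 ≤ t) :
    HasDerivAt (fun u : ℝ => (1 + u) ^ p) (p * (1 + t) ^ (p - 1)) t := by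
  have h1 : HasDerivAt (fun u : ℝ => 1 + u) 1 t := (hasDerivAt_id t).const_add 1
  have h2 := Real.hasDerivAt_rpow_const (x := 1 + t) (p := p) (Or.inl (by positivity))
  simpa [Function.comp_def] using h2.comp t h1

noncomputable def etaD (α : ℝ) (x : E2) : E2 →L[ℝ] ℝ :=
  (-(α / 2) * (1 + ‖x‖ ^ 2) ^ (-(α / 2) - 1)) • (2 • innerSL ℝ x)

lemma hasFDerivAt_eta (α : ℝ) (x : E2) : HasFDerivAt (eta α) (etaD α x) x := by
  have hq : HasFDerivAt (fun y : E2 => ‖y‖ ^ 2) (2 • innerSL ℝ x) x :=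
    (hasStrictFDerivAt_norm_sq x).hasFDerivAt
  have hd := hasDerivAt_one_add_rpow (-(α / 2)) (‖x‖ ^ 2) (by positivity)
  exact hd.comp_hasFDerivAt x hq

noncomputable def etaDD (α : ℝ) (x : E2) : E2 →L[ℝ] (E2 →L[ℝ] ℝ) :=
  (-(α / 2) * (1 + ‖x‖ ^ 2) ^ (-(α / 2) - 1)) • (2 • (innerSL ℝ : E2 →L[ℝ] E2 →L[ℝ] ℝ))
  + ((-(α / 2)) • (((-(α / 2) - 1) * (1 + ‖x‖ ^ 2) ^ (-(α / 2) - 1 - 1)) • (2 • innerSL ℝ x))).smulRight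
      (2 • innerSL ℝ x)

lemma hasFDerivAt_etaD (α : ℝ) (x : E2) : HasFDerivAt (etaD α) (etaDD α x) x := by
  have hq : HasFDerivAt (fun y : E2 => ‖y‖ ^ 2) (2 • innerSL ℝ x) x :=
    (hasStrictFDerivAt_norm_sq x).hasFDerivAt
  have hg1 := (hasDerivAt_one_add_rpow (-(α / 2) - 1) (‖x‖ ^ 2) (by positivity)).comp_hasFDerivAt x hq
  have hg := hg1.const_mul (-(α / 2))
  have hw : HasFDerivAt (fun y : E2 => 2 • innerSL ℝ y) (2 • (innerSL ℝ : E2 →L[ℝ] E2 →L[ℝ] ℝ)) x :=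
    ((innerSL ℝ : E2 →L[ℝ] E2 →L[ℝ] ℝ).hasFDerivAt).const_smul 2
  exact hg.smul hw

lemma norm_etaDD_le (α : ℝ) (hα : 0 ≤ α) (x : E2) : ‖etaDD α x‖ ≤ α + α * (α + 2) := by
  have hC : (0:ℝ) ≤ α + α * (α + 2) := by nlinarith
  have hx2 : (0:ℝ) ≤ ‖x‖ ^ 2 := by positivity
  have hB1 : (1:ℝ) ≤ 1 + ‖x‖ ^ 2 := by linarith
  have hBpos : (0:ℝ) < 1 + ‖x‖ ^ 2 := by linarith
  set B : ℝ := 1 + ‖x‖ ^ 2 with hBdef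
  have hr1 : B ^ (-(α/2) - 1) ≤ 1 := Real.rpow_le_one_of_one_le_of_nonpos hB1 (by linarith)
  have hr1' : (0:ℝ) ≤ B ^ (-(α/2) - 1) := Real.rpow_nonneg hBpos.le _
  have hr2' : (0:ℝ) ≤ B ^ (-(α/2) - 1 - 1) := Real.rpow_nonneg hBpos.le _
  have hmul : B ^ (-(α/2) - 1 - 1) * B = B ^ (-(α/2) - 1) := by
    rw [← Real.rpow_add_one (ne_of_gt hBpos)]
    norm_num
  have hkey : B ^ (-(α/2) - 1 - 1) * (‖x‖ * ‖x‖) ≤ 1 := by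
    have hxx : ‖x‖ * ‖x‖ ≤ B := by rw [hBdef]; nlinarith [sq_nonneg ‖x‖]
    calc B ^ (-(α/2) - 1 - 1) * (‖x‖ * ‖x‖) ≤ B ^ (-(α/2) - 1 - 1) * B :=
          mul_le_mul_of_nonneg_left hxx hr2'
      _ = B ^ (-(α/2) - 1) := hmul
      _ ≤ 1 := hr1
  refine ContinuousLinearMap.opNorm_le_bound _ hC fun u => ?_
  refine ContinuousLinearMap.opNorm_le_bound _ (mul_nonneg hC (norm_nonneg u)) fun v => ?_
  simp only [etaDD, ContinuousLinearMap.add_apply, ContinuousLinearMap.smul_apply,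
    ContinuousLinearMap.smulRight_apply, innerSL_apply_apply, smul_eq_mul, two_smul,
    ContinuousLinearMap.coe_smul', Pi.smul_apply]
  have cs1 : |(inner ℝ u v : ℝ)| ≤ ‖u‖ * ‖v‖ := abs_real_inner_le_norm u v
  have cs2 : |(inner ℝ x u : ℝ)| ≤ ‖x‖ * ‖u‖ := abs_real_inner_le_norm x u
  have cs3 : |(inner ℝ x v : ℝ)| ≤ ‖x‖ * ‖v‖ := abs_real_inner_le_norm x v
  have huv : (0:ℝ) ≤ ‖u‖ * ‖v‖ := by positivity
  rw [Real.norm_eq_abs]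
  refine le_trans (abs_add_le _ _) ?_
  have hα2 : (0:ℝ) ≤ α / 2 := by linarith
  have t1 : |-(α / 2) * B ^ (-(α/2) - 1) * ((inner ℝ u v : ℝ) + inner ℝ u v)| ≤ α * (‖u‖ * ‖v‖) := by
    rw [abs_mul, abs_mul, abs_neg, abs_of_nonneg hα2, abs_of_nonneg hr1']
    have h2 : |(inner ℝ u v : ℝ) + inner ℝ u v| ≤ 2 * (‖u‖ * ‖v‖) :=
      le_trans (abs_add_le _ _) (by linarith)
    calc α / 2 * B ^ (-(α/2) - 1) * |(inner ℝ u v : ℝ) + inner ℝ u v|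
        ≤ α / 2 * 1 * (2 * (‖u‖ * ‖v‖)) :=
          mul_le_mul (mul_le_mul_of_nonneg_left hr1 hα2) h2 (abs_nonneg _) (by linarith)
      _ = α * (‖u‖ * ‖v‖) := by ring
  have t2 : |-(α / 2) * ((-(α / 2) - 1) * B ^ (-(α/2) - 1 - 1) * ((inner ℝ x u : ℝ) + inner ℝ x u)) *
      ((inner ℝ x v : ℝ) + inner ℝ x v)| ≤ α * (α + 2) * (‖u‖ * ‖v‖) := by
    rw [abs_mul, abs_mul, abs_mul, abs_mul, abs_neg, abs_of_nonneg hα2,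
      abs_of_nonpos (by linarith : -(α / 2) - 1 ≤ 0), abs_of_nonneg hr2']
    have h2 : |(inner ℝ x u : ℝ) + inner ℝ x u| ≤ 2 * (‖x‖ * ‖u‖) :=
      le_trans (abs_add_le _ _) (by linarith)
    have h3 : |(inner ℝ x v : ℝ) + inner ℝ x v| ≤ 2 * (‖x‖ * ‖v‖) :=
      le_trans (abs_add_le _ _) (by linarith)
    have hxu : (0:ℝ) ≤ ‖x‖ * ‖u‖ := by positivity
    have hxv : (0:ℝ) ≤ ‖x‖ * ‖v‖ := by positivity
    have step1 : α / 2 * (-(-(α / 2) - 1) * B ^ (-(α/2) - 1 - 1) * |(inner ℝ x u : ℝ) + inner ℝ x u|) *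
        |(inner ℝ x v : ℝ) + inner ℝ x v|
        ≤ α / 2 * ((α / 2 + 1) * B ^ (-(α/2) - 1 - 1) * (2 * (‖x‖ * ‖u‖))) * (2 * (‖x‖ * ‖v‖)) := by
      have e1 : -(-(α / 2) - 1) = α / 2 + 1 := by ring
      rw [e1]
      have hmid : (α / 2 + 1) * B ^ (-(α/2) - 1 - 1) * |(inner ℝ x u : ℝ) + inner ℝ x u|
          ≤ (α / 2 + 1) * B ^ (-(α/2) - 1 - 1) * (2 * (‖x‖ * ‖u‖)) :=
        mul_le_mul_of_nonneg_left h2 (by positivity)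
      have hmid' := mul_le_mul_of_nonneg_left hmid hα2
      exact mul_le_mul hmid' h3 (abs_nonneg _) (by positivity)
    refine le_trans step1 ?_
    have : α / 2 * ((α / 2 + 1) * B ^ (-(α/2) - 1 - 1) * (2 * (‖x‖ * ‖u‖))) * (2 * (‖x‖ * ‖v‖))
        = (α * (α + 2) * (‖u‖ * ‖v‖)) * (B ^ (-(α/2) - 1 - 1) * (‖x‖ * ‖x‖)) := by ring
    rw [this]
    nlinarith [mul_nonneg (mul_nonneg (by nlinarith : (0:ℝ) ≤ α * (α + 2)) huv)
      (mul_nonneg hr2' (mul_nonneg (norm_nonneg x) (norm_nonneg x))),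
      mul_le_mul_of_nonneg_left hkey (mul_nonneg (by nlinarith : (0:ℝ) ≤ α * (α + 2)) huv)]
  calc _ ≤ α * (‖u‖ * ‖v‖) + α * (α + 2) * (‖u‖ * ‖v‖) := add_le_add t1 t2
    _ = (α + α * (α + 2)) * ‖u‖ * ‖v‖ := by ring

lemma etaD_lipschitz (α : ℝ) (hα : 0 ≤ α) (a b : E2) :
    ‖etaD α a - etaD α b‖ ≤ (α + α * (α + 2)) * ‖a - b‖ :=
  convex_univ.norm_image_sub_le_of_norm_hasFDerivWithin_le
    (fun x _ => (hasFDerivAt_etaD α x).hasFDerivWithinAt)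
    (fun x _ => norm_etaDD_le α hα x) (Set.mem_univ b) (Set.mem_univ a)

lemma eta_second_diff (α : ℝ) (hα : 0 ≤ α) (x y : E2) :
    |eta α (x + y) + eta α (x - y) - 2 * eta α x| ≤ 2 * (α + α * (α + 2)) * ‖y‖ ^ 2 := by
  have hM : (0:ℝ) ≤ α + α * (α + 2) := by nlinarith
  set φ : ℝ → ℝ := fun t => eta α (x + t • y) + eta α (x - t • y) with hφ
  have hder : ∀ t : ℝ, HasDerivAt φ ((etaD α (x + t • y)) y - (etaD α (x - t • y)) y) t := by
    intro t
    have hc : HasDerivAt (fun t : ℝ => x + t • y) y t := by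
      simpa using ((hasDerivAt_id t).smul_const y).const_add x
    have hc' : HasDerivAt (fun t : ℝ => x - t • y) (-y) t := by
      have := (((hasDerivAt_id t).smul_const y).const_add x).neg
      simpa [sub_eq_add_neg] using ((hasDerivAt_id t).smul_const y).neg.const_add x
    have h1 := (hasFDerivAt_eta α (x + t • y)).comp_hasDerivAt t hc
    have h2 := (hasFDerivAt_eta α (x - t • y)).comp_hasDerivAt t hc'
    have h3 := h1.add h2
    simpa [map_neg, sub_eq_add_neg, Function.comp_def, hφ, Pi.add_def] using h3
  have hbound : ∀ t ∈ Set.Ico (0:ℝ) 1,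
      ‖(etaD α (x + t • y)) y - (etaD α (x - t • y)) y‖ ≤ 2 * (α + α * (α + 2)) * ‖y‖ ^ 2 := by
    intro t ht
    have e1 : (etaD α (x + t • y)) y - (etaD α (x - t • y)) y
        = (etaD α (x + t • y) - etaD α (x - t • y)) y := by
      simp [ContinuousLinearMap.sub_apply]
    rw [e1]
    have h4 : ‖(etaD α (x + t • y) - etaD α (x - t • y)) y‖
        ≤ ‖etaD α (x + t • y) - etaD α (x - t • y)‖ * ‖y‖ :=
      ContinuousLinearMap.le_opNorm _ y
    have h5 := etaD_lipschitz α hα (x + t • y) (x - t • y)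
    have e2 : (x + t • y) - (x - t • y) = (2 * t) • y := by module
    rw [e2, norm_smul, Real.norm_eq_abs, abs_of_nonneg (by linarith [ht.1] : (0:ℝ) ≤ 2 * t)] at h5
    have hy : (0:ℝ) ≤ ‖y‖ := norm_nonneg y
    calc ‖(etaD α (x + t • y) - etaD α (x - t • y)) y‖
        ≤ ‖etaD α (x + t • y) - etaD α (x - t • y)‖ * ‖y‖ := h4
      _ ≤ ((α + α * (α + 2)) * (2 * t * ‖y‖)) * ‖y‖ :=
          mul_le_mul_of_nonneg_right h5 hy
      _ = 2 * (α + α * (α + 2)) * (t * (‖y‖ * ‖y‖)) := by ring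
      _ ≤ 2 * (α + α * (α + 2)) * (‖y‖ * ‖y‖) :=
          mul_le_mul_of_nonneg_left (mul_le_of_le_one_left (mul_nonneg hy hy) ht.2.le)
            (by linarith)
      _ = 2 * (α + α * (α + 2)) * ‖y‖ ^ 2 := by ring
  have hseg := norm_image_sub_le_of_norm_deriv_le_segment_01'
    (fun t _ => (hder t).hasDerivWithinAt) hbound
  have e3 : φ 1 - φ 0 = eta α (x + y) + eta α (x - y) - 2 * eta α x := by
    simp [hφ]; ring
  rw [e3, Real.norm_eq_abs] at hseg
  exact hseg

lemma integrable_fun_norm_of_profile {f : ℝ → ℝ}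
    (hf : IntegrableOn (fun r : ℝ => r * f r) (Set.Ioi (0:ℝ))) :
    Integrable (fun x : E2 => f ‖x‖) := by
  have hdim : Module.finrank ℝ E2 = 2 := finrank_euclideanSpace_fin
  have h1 : Integrable (fun r : Set.Ioi (0:ℝ) => f r) (Measure.volumeIoiPow 1) := by
    rw [Measure.volumeIoiPow, integrable_withDensity_iff
      ((measurable_subtype_coe.pow_const 1).ennreal_ofReal)
      (ae_of_all _ fun r => ENNReal.ofReal_lt_top)]
    have hemb : MeasurableEmbedding ((↑) : Set.Ioi (0:ℝ) → ℝ) :=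
      MeasurableEmbedding.subtype_coe measurableSet_Ioi
    have e1 : (fun r : Set.Ioi (0:ℝ) => f r * (ENNReal.ofReal ((r:ℝ) ^ 1)).toReal)
        = (fun r : ℝ => f r * r) ∘ ((↑) : Set.Ioi (0:ℝ) → ℝ) := by
      funext r
      simp [ENNReal.toReal_ofReal (le_of_lt r.2)]
    rw [e1, ← hemb.integrable_map_iff, hemb.map_comap, Subtype.range_coe]
    exact hf.congr_fun (fun r _ => by ring) measurableSet_Ioi
  have h2 : Integrable (fun p : Metric.sphere (0:E2) 1 × Set.Ioi (0:ℝ) => f p.2)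
      ((volume : Measure E2).toSphere.prod (Measure.volumeIoiPow 1)) := by
    have := (integrable_const (μ := (volume : Measure E2).toSphere) (1:ℝ)).mul_prod h1
    simpa using this
  have hmp := (volume : Measure E2).measurePreserving_homeomorphUnitSphereProd
  rw [hdim] at hmp
  have h3 : Integrable (fun x : ({(0:E2)}ᶜ : Set E2) => f ‖(x:E2)‖)
      ((volume : Measure E2).comap (↑)) :=
    by simpa [Function.comp_def] using (hmp.integrable_comp_emb (Homeomorph.measurableEmbedding _)).mpr h2
  have hemb0 : MeasurableEmbedding ((↑) : ({(0:E2)}ᶜ : Set E2) → E2) :=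
    MeasurableEmbedding.subtype_coe (measurableSet_singleton 0).compl
  have h3' : Integrable ((fun x : E2 => f ‖x‖) ∘ ((↑) : ({(0:E2)}ᶜ : Set E2) → E2))
      ((volume : Measure E2).comap (↑)) := h3
  have h4 := hemb0.integrable_map_iff.mpr h3'
  rw [hemb0.map_comap, Subtype.range_coe] at h4
  rwa [MeasureTheory.restrict_compl_singleton] at h4

lemma eta_pos (α : ℝ) (x : E2) : 0 < eta α x :=
  Real.rpow_pos_of_pos (by positivity) _

lemma eta_le_one (α : ℝ) (hα : 0 ≤ α) (x : E2) : eta α x ≤ 1 := by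
  have h1 : (1:ℝ) ≤ 1 + ‖x‖ ^ 2 := by nlinarith [sq_nonneg ‖x‖]
  exact Real.rpow_le_one_of_one_le_of_nonpos h1 (by linarith)

lemma num_bound (α : ℝ) (hα : 0 ≤ α) {R : ℝ} (hR : 1 ≤ R) (x y : E2) :
    |etaR α R (x + y) + etaR α R (x - y) - 2 * etaR α R x|
      ≤ min (2 * (α + α * (α + 2)) * R⁻¹ ^ 2 * ‖y‖ ^ 2) 4 := by
  have hR0 : (0:ℝ) < R := lt_of_lt_of_le one_pos hR
  refine le_min ?_ ?_
  · have h := eta_second_diff α hα (R⁻¹ • x) (R⁻¹ • y)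
    have e3 : ‖R⁻¹ • y‖ ^ 2 = R⁻¹ ^ 2 * ‖y‖ ^ 2 := by
      rw [norm_smul, Real.norm_eq_abs, abs_of_nonneg (inv_nonneg.2 hR0.le), mul_pow]
    rw [e3] at h
    have e1 : etaR α R (x + y) = eta α (R⁻¹ • x + R⁻¹ • y) := by rw [etaR, smul_add]
    have e2 : etaR α R (x - y) = eta α (R⁻¹ • x - R⁻¹ • y) := by rw [etaR, smul_sub]
    rw [e1, e2, etaR]
    calc |eta α (R⁻¹ • x + R⁻¹ • y) + eta α (R⁻¹ • x - R⁻¹ • y) - 2 * eta α (R⁻¹ • x)|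
        ≤ 2 * (α + α * (α + 2)) * (R⁻¹ ^ 2 * ‖y‖ ^ 2) := h
      _ = 2 * (α + α * (α + 2)) * R⁻¹ ^ 2 * ‖y‖ ^ 2 := by ring
  · have h1 := eta_pos α (R⁻¹ • (x + y))
    have h2 := eta_pos α (R⁻¹ • (x - y))
    have h3 := eta_pos α (R⁻¹ • x)
    have h4 := eta_le_one α hα (R⁻¹ • (x + y))
    have h5 := eta_le_one α hα (R⁻¹ • (x - y))
    have h6 := eta_le_one α hα (R⁻¹ • x)
    rw [etaR, etaR, etaR, abs_le]
    constructor <;> nlinarith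

lemma domF_integrable {s : ℝ} (c : ℝ) (hs0 : 0 < s) (hs1 : s < 1) (hc : 0 ≤ c) :
    Integrable (fun y : E2 => min (c * ‖y‖ ^ 2) 4 / ‖y‖ ^ (2 + 2 * s)) := by
  apply integrable_fun_norm_of_profile (f := fun r : ℝ => min (c * r ^ 2) 4 / r ^ (2 + 2 * s))
  have hmeas : Measurable (fun r : ℝ => r * (min (c * r ^ 2) 4 / r ^ (2 + 2 * s))) := by
    apply measurable_id.mul
    exact ((measurable_const.mul (measurable_id.pow_const 2)).min measurable_const).div
      (Real.continuous_rpow_const (by linarith)).measurable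
  rw [← Set.Ioc_union_Ioi_eq_Ioi (zero_le_one (α := ℝ))]
  apply IntegrableOn.union
  · have hg : IntegrableOn (fun r : ℝ => c * r ^ (1 - 2 * s)) (Set.Ioc (0:ℝ) 1) :=
      ((intervalIntegral.intervalIntegrable_rpow' (by linarith : (-1:ℝ) < 1 - 2 * s)).1).const_mul c
    refine Integrable.mono hg hmeas.aestronglyMeasurable.restrict ?_
    filter_upwards [ae_restrict_mem measurableSet_Ioc] with r hr
    have hr0 : (0:ℝ) < r := hr.1
    have hden : (0:ℝ) < r ^ (2 + 2 * s) := Real.rpow_pos_of_pos hr0 _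
    have hnum0 : (0:ℝ) ≤ min (c * r ^ 2) 4 := le_min (by positivity) (by norm_num)
    have hrp : (0:ℝ) ≤ c * r ^ (1 - 2 * s) := by positivity
    rw [Real.norm_eq_abs, Real.norm_eq_abs, abs_of_nonneg (by positivity), abs_of_nonneg hrp]
    have step1 : r * (min (c * r ^ 2) 4 / r ^ (2 + 2 * s)) ≤ r * (c * r ^ 2 / r ^ (2 + 2 * s)) :=
      mul_le_mul_of_nonneg_left ((div_le_div_iff_of_pos_right hden).mpr (min_le_left _ _)) hr0.le
    have h3 : r * r ^ 2 = r ^ ((3:ℝ)) := by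
      rw [show ((3:ℝ)) = ((3:ℕ):ℝ) by norm_num, Real.rpow_natCast]; ring
    have step2 : r * (c * r ^ 2 / r ^ (2 + 2 * s)) = c * r ^ (1 - 2 * s) := by
      calc r * (c * r ^ 2 / r ^ (2 + 2 * s)) = c * ((r * r ^ 2) / r ^ (2 + 2 * s)) := by ring
        _ = c * (r ^ ((3:ℝ)) / r ^ (2 + 2 * s)) := by rw [h3]
        _ = c * r ^ ((3:ℝ) - (2 + 2 * s)) := by rw [Real.rpow_sub hr0]
        _ = c * r ^ (1 - 2 * s) := by rw [show (3:ℝ) - (2 + 2 * s) = 1 - 2 * s by ring]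
    linarith
  · have hg : IntegrableOn (fun r : ℝ => 4 * r ^ (-(1 + 2 * s))) (Set.Ioi (1:ℝ)) :=
      (integrableOn_Ioi_rpow_of_lt (by linarith) one_pos).const_mul 4
    refine Integrable.mono hg hmeas.aestronglyMeasurable.restrict ?_
    filter_upwards [ae_restrict_mem measurableSet_Ioi] with r hr
    have hr0 : (0:ℝ) < r := lt_trans one_pos hr
    have hden : (0:ℝ) < r ^ (2 + 2 * s) := Real.rpow_pos_of_pos hr0 _
    have hnum0 : (0:ℝ) ≤ min (c * r ^ 2) 4 := le_min (by positivity) (by norm_num)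
    have hrp : (0:ℝ) ≤ 4 * r ^ (-(1 + 2 * s)) := by positivity
    rw [Real.norm_eq_abs, Real.norm_eq_abs, abs_of_nonneg (by positivity), abs_of_nonneg hrp]
    have step1 : r * (min (c * r ^ 2) 4 / r ^ (2 + 2 * s)) ≤ r * (4 / r ^ (2 + 2 * s)) :=
      mul_le_mul_of_nonneg_left ((div_le_div_iff_of_pos_right hden).mpr (min_le_right _ _)) hr0.le
    have step2 : r * (4 / r ^ (2 + 2 * s)) = 4 * r ^ (-(1 + 2 * s)) := by
      calc r * (4 / r ^ (2 + 2 * s)) = 4 * (r ^ ((1:ℝ)) / r ^ (2 + 2 * s)) := by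
            rw [Real.rpow_one]; ring
        _ = 4 * r ^ ((1:ℝ) - (2 + 2 * s)) := by rw [Real.rpow_sub hr0]
        _ = 4 * r ^ (-(1 + 2 * s)) := by rw [show (1:ℝ) - (2 + 2 * s) = -(1 + 2 * s) by ring]
    linarith

lemma div_le_div_nonneg_denom {a b d : ℝ} (h : a ≤ b) (hd : 0 ≤ d) : a / d ≤ b / d := by
  rcases eq_or_lt_of_le hd with h0 | h0
  · simp [← h0]
  · exact (div_le_div_iff_of_pos_right h0).mpr h

lemma domF_meas (s c : ℝ) (hs : 0 < s) :
    AEStronglyMeasurable (fun y : E2 => min (c * ‖y‖ ^ 2) 4 / ‖y‖ ^ (2 + 2 * s)) volume :=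
  (((measurable_const.mul (measurable_norm.pow_const 2)).min measurable_const).div
    ((continuous_norm.rpow_const fun _ => Or.inr (by linarith)).measurable)).aestronglyMeasurable

lemma integrand_bound (s α : ℝ) (hα : 0 ≤ α) {R : ℝ} (hR : 1 ≤ R) (x y : E2) :
    |(etaR α R (x + y) + etaR α R (x - y) - 2 * etaR α R x) / ‖y‖ ^ (2 + 2 * s)|
    ≤ min (2 * (α + α * (α + 2)) * R⁻¹ ^ 2 * ‖y‖ ^ 2) 4 / ‖y‖ ^ (2 + 2 * s) := by
  have hden : (0:ℝ) ≤ ‖y‖ ^ (2 + 2 * s) := Real.rpow_nonneg (norm_nonneg y) _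
  rw [abs_div, abs_of_nonneg hden]
  exact div_le_div_nonneg_denom (num_bound α hα hR x y) hden

lemma integrand_meas (s α R : ℝ) (hs : 0 < s) (x : E2) :
    AEStronglyMeasurable (fun y : E2 =>
      (etaR α R (x + y) + etaR α R (x - y) - 2 * etaR α R x) / ‖y‖ ^ (2 + 2 * s)) volume := by
  have heta : Continuous (eta α) := by
    apply Continuous.rpow_const
    · exact continuous_const.add (continuous_norm.pow 2)
    · intro z
      left
      positivity
  have hetaR : Continuous (etaR α R) := heta.comp (continuous_id.const_smul R⁻¹)
  have hnum : Continuous (fun y : E2 =>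
      etaR α R (x + y) + etaR α R (x - y) - 2 * etaR α R x) := by
    apply Continuous.sub
    · exact (hetaR.comp (continuous_const.add continuous_id)).add
        (hetaR.comp (continuous_const.sub continuous_id))
    · exact continuous_const
  exact (hnum.measurable.div
    ((continuous_norm.rpow_const fun _ => Or.inr (by linarith)).measurable)).aestronglyMeasurable

lemma part1 (s α : ℝ) (hs0 : 0 < s) (hs1 : s < 1) (hα : 0 ≤ α) {R : ℝ} (hR : 1 ≤ R) (x : E2) :
    Integrable (fun y : E2 =>
      (etaR α R (x + y) + etaR α R (x - y) - 2 * etaR α R x) / ‖y‖ ^ (2 + 2 * s)) := by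
  have hR0 : (0:ℝ) < R := lt_of_lt_of_le one_pos hR
  have hc : (0:ℝ) ≤ 2 * (α + α * (α + 2)) * R⁻¹ ^ 2 := by positivity
  refine Integrable.mono (domF_integrable _ hs0 hs1 hc) (integrand_meas s α R hs0 x) ?_
  refine ae_of_all _ fun y => ?_
  have hden : (0:ℝ) ≤ ‖y‖ ^ (2 + 2 * s) := Real.rpow_nonneg (norm_nonneg y) _
  have hnum0 : (0:ℝ) ≤ min (2 * (α + α * (α + 2)) * R⁻¹ ^ 2 * ‖y‖ ^ 2) 4 :=
    le_min (by positivity) (by norm_num)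
  rw [Real.norm_eq_abs, Real.norm_eq_abs, abs_of_nonneg (div_nonneg hnum0 hden)]
  exact integrand_bound s α hα hR x y

lemma tendsto_I (s α : ℝ) (hs0 : 0 < s) (hs1 : s < 1) (hα : 0 ≤ α) :
    Tendsto (fun R : ℝ => ∫ y : E2,
        min (2 * (α + α * (α + 2)) * R⁻¹ ^ 2 * ‖y‖ ^ 2) 4 / ‖y‖ ^ (2 + 2 * s))
      atTop (nhds 0) := by
  have hM : (0:ℝ) ≤ 2 * (α + α * (α + 2)) := by nlinarith
  have key := MeasureTheory.tendsto_integral_filter_of_dominated_convergence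
    (μ := (volume : Measure E2)) (l := (atTop : Filter ℝ))
    (F := fun R (y : E2) => min (2 * (α + α * (α + 2)) * R⁻¹ ^ 2 * ‖y‖ ^ 2) 4 / ‖y‖ ^ (2 + 2 * s))
    (f := fun _ : E2 => (0:ℝ))
    (bound := fun y : E2 => min (2 * (α + α * (α + 2)) * ‖y‖ ^ 2) 4 / ‖y‖ ^ (2 + 2 * s))
    (Eventually.of_forall fun R => domF_meas s _ hs0)
    ?_ (domF_integrable _ hs0 hs1 hM) ?_
  · simpa using key
  · -- bound
    filter_upwards [eventually_ge_atTop (1:ℝ)] with R hR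
    refine ae_of_all _ fun y => ?_
    have hR0 : (0:ℝ) < R := lt_of_lt_of_le one_pos hR
    have hden : (0:ℝ) ≤ ‖y‖ ^ (2 + 2 * s) := Real.rpow_nonneg (norm_nonneg y) _
    have hnum0 : (0:ℝ) ≤ min (2 * (α + α * (α + 2)) * R⁻¹ ^ 2 * ‖y‖ ^ 2) 4 :=
      le_min (by positivity) (by norm_num)
    rw [Real.norm_eq_abs, abs_of_nonneg (div_nonneg hnum0 hden)]
    apply div_le_div_nonneg_denom _ hden
    apply min_le_min _ le_rfl
    have hinv : R⁻¹ ≤ 1 := by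
      rw [inv_le_one_iff₀]
      right; exact hR
    have hinv0 : (0:ℝ) ≤ R⁻¹ := inv_nonneg.2 hR0.le
    have : R⁻¹ ^ 2 ≤ 1 := by nlinarith
    nlinarith [sq_nonneg ‖y‖, mul_nonneg hM (sq_nonneg ‖y‖)]
  · -- pointwise limit
    have hae : ∀ᵐ y : E2 ∂volume, y ≠ 0 := by
      have := (Set.countable_singleton (0:E2)).ae_notMem (volume : Measure E2)
      filter_upwards [this] with y hy
      simpa using hy
    filter_upwards [hae] with y hy
    have hy0 : (0:ℝ) < ‖y‖ := norm_pos_iff.mpr hy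
    have hden : (0:ℝ) < ‖y‖ ^ (2 + 2 * s) := Real.rpow_pos_of_pos hy0 _
    have hlim : Tendsto (fun R : ℝ => (2 * (α + α * (α + 2)) * ‖y‖ ^ 2 / ‖y‖ ^ (2 + 2 * s)) * R⁻¹ ^ 2)
        atTop (nhds 0) := by
      have h1 : Tendsto (fun R : ℝ => R⁻¹ ^ 2) atTop (nhds 0) := by
        have := (tendsto_inv_atTop_zero (𝕜 := ℝ)).pow 2
        simpa using this
      have := h1.const_mul (2 * (α + α * (α + 2)) * ‖y‖ ^ 2 / ‖y‖ ^ (2 + 2 * s))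
      simpa using this
    refine tendsto_of_tendsto_of_tendsto_of_le_of_le tendsto_const_nhds hlim ?_ ?_
    · intro R
      have hnum0 : (0:ℝ) ≤ min (2 * (α + α * (α + 2)) * R⁻¹ ^ 2 * ‖y‖ ^ 2) 4 :=
        le_min (by positivity) (by norm_num)
      exact div_nonneg hnum0 hden.le
    · intro R
      calc min (2 * (α + α * (α + 2)) * R⁻¹ ^ 2 * ‖y‖ ^ 2) 4 / ‖y‖ ^ (2 + 2 * s)
          ≤ (2 * (α + α * (α + 2)) * R⁻¹ ^ 2 * ‖y‖ ^ 2) / ‖y‖ ^ (2 + 2 * s) :=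
            div_le_div_nonneg_denom (min_le_left _ _) hden.le
        _ = (2 * (α + α * (α + 2)) * ‖y‖ ^ 2 / ‖y‖ ^ (2 + 2 * s)) * R⁻¹ ^ 2 := by ring

lemma FR_abs_le (s α : ℝ) (hs0 : 0 < s) (hs1 : s < 1) (hα : 0 ≤ α) {R : ℝ} (hR : 1 ≤ R) (x : E2) :
    |FR s α R x| ≤ ∫ y : E2,
      min (2 * (α + α * (α + 2)) * R⁻¹ ^ 2 * ‖y‖ ^ 2) 4 / ‖y‖ ^ (2 + 2 * s) := by
  have hR0 : (0:ℝ) < R := lt_of_lt_of_le one_pos hR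
  have hc : (0:ℝ) ≤ 2 * (α + α * (α + 2)) * R⁻¹ ^ 2 := by positivity
  rw [FR, ← Real.norm_eq_abs]
  exact norm_integral_le_of_norm_le (domF_integrable _ hs0 hs1 hc)
    (ae_of_all _ fun y => by
      rw [Real.norm_eq_abs]
      exact integrand_bound s α hα hR x y)

theorem stmt_0 (s α : ℝ) (hs0 : 0 < s) (hs1 : s < 1) (hα : 4 < α) :
    (∀ R : ℝ, 1 ≤ R → ∀ x : EuclideanSpace ℝ (Fin 2),
      Integrable (fun y : EuclideanSpace ℝ (Fin 2) =>
        (etaR α R (x + y) + etaR α R (x - y) - 2 * etaR α R x) / ‖y‖ ^ (2 + 2 * s))) ∧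
    Tendsto (fun R : ℝ => ⨆ x : EuclideanSpace ℝ (Fin 2), |FR s α R x|)
      atTop (nhds 0) := by
  have hα0 : (0:ℝ) ≤ α := by linarith
  constructor
  · intro R hR x
    exact part1 s α hs0 hs1 hα0 hR x
  · refine tendsto_of_tendsto_of_tendsto_of_le_of_le' (tendsto_const_nhds)
      (tendsto_I s α hs0 hs1 hα0) ?_ ?_
    · filter_upwards [eventually_ge_atTop (1:ℝ)] with R hR
      have hbdd : BddAbove (Set.range fun x : E2 => |FR s α R x|) := by
        refine ⟨∫ y : E2, min (2 * (α + α * (α + 2)) * R⁻¹ ^ 2 * ‖y‖ ^ 2) 4 / ‖y‖ ^ (2 + 2 * s), ?_⟩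
        rintro _ ⟨x, rfl⟩
        exact FR_abs_le s α hs0 hs1 hα0 hR x
      exact le_trans (abs_nonneg (FR s α R 0)) (le_ciSup hbdd 0)
    · filter_upwards [eventually_ge_atTop (1:ℝ)] with R hR
      exact ciSup_le fun x => FR_abs_le s α hs0 hs1 hα0 hR x
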